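/- arXiv:2102.08570 — 3 statements merged into one kernel-verified Lean document; each statement's English description precedes it below -/
import Mathlib

section
/- Let ε, β, γ > 0 with ε > γ/(2β), let R > 0 and Θ = {θ ∈ ℝ^d : ‖θ‖ ≤ R}, and let PR(θ) = (γ/2 - εβ)‖θ‖². Then θ_PS = 0 satisfies PR(θ_PS) - inf_{θ∈Θ} PR(θ) = (εβ - γ/2)R², which can be made larger than any prescribed Δ > 0 by choosing R large enough. -/
/-- For ε > γ/(2β), Θ the ball of radius R, and PR(θ) = (γ/2 - εβ)‖θ‖²,
the stable point θ_PS = 0 satisfies PR(0) - inf_{θ∈Θ} PR(θ) = (εβ - γ/2)R², which can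
be made larger than any Δ > 0 by choosing R large. -/
theorem stmt2 (d : ℕ) (hd : 0 < d) (ε β γ : ℝ) (hε : 0 < ε) (hβ : 0 < β) (hγ : 0 < γ)
    (h : ε > γ / (2 * β)) (R : ℝ) (hR : 0 < R)
    (PR : EuclideanSpace ℝ (Fin d) → ℝ)
    (hPR : ∀ θ, PR θ = (γ / 2 - ε * β) * ‖θ‖ ^ 2) :
    (PR 0 - ⨅ θ : Metric.closedBall (0 : EuclideanSpace ℝ (Fin d)) R, PR θ
      = (ε * β - γ / 2) * R ^ 2) ∧
    ∀ Δ > (0 : ℝ), ∃ R' > (0 : ℝ), (ε * β - γ / 2) * R' ^ 2 > Δ := by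
  have hc : γ / 2 - ε * β < 0 := by
    have : γ / 2 < ε * β := by
      have := (div_lt_iff₀ (by positivity : (0:ℝ) < 2 * β)).mp h
      nlinarith
    linarith
  have hpos : 0 < ε * β - γ / 2 := by linarith
  constructor
  · -- define the boundary point
    set x : EuclideanSpace ℝ (Fin d) := EuclideanSpace.single ⟨0, hd⟩ R with hx
    have hxn : ‖x‖ = R := by
      simp [hx, EuclideanSpace.norm_single, Real.norm_eq_abs, abs_of_pos hR]
    have hxmem : x ∈ Metric.closedBall (0 : EuclideanSpace ℝ (Fin d)) R := by
      simp [Metric.mem_closedBall, dist_zero_right, hxn]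
    have hinf : (⨅ θ : Metric.closedBall (0 : EuclideanSpace ℝ (Fin d)) R, PR θ)
        = (γ / 2 - ε * β) * R ^ 2 := by
      apply le_antisymm
      · have := ciInf_le (f := fun θ : Metric.closedBall (0 : EuclideanSpace ℝ (Fin d)) R => PR θ)
          (c := ⟨x, hxmem⟩) ?_
        · simpa [hPR, hxn] using this
        · refine ⟨(γ / 2 - ε * β) * R ^ 2, ?_⟩
          rintro y ⟨⟨θ, hθ⟩, rfl⟩
          simp only [hPR]
          have hθn : ‖θ‖ ≤ R := by
            simpa [Metric.mem_closedBall, dist_zero_right] using hθ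
          have : ‖θ‖ ^ 2 ≤ R ^ 2 := by
            apply sq_le_sq' <;> nlinarith [norm_nonneg θ]
          nlinarith
      · haveI : Nonempty ↑(Metric.closedBall (0 : EuclideanSpace ℝ (Fin d)) R) := ⟨⟨x, hxmem⟩⟩
        apply le_ciInf
        rintro ⟨θ, hθ⟩
        simp only [hPR]
        have hθn : ‖θ‖ ≤ R := by
          simpa [Metric.mem_closedBall, dist_zero_right] using hθ
        have : ‖θ‖ ^ 2 ≤ R ^ 2 := by
          apply sq_le_sq' <;> nlinarith [norm_nonneg θ]
        nlinarith
    rw [hinf, hPR]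
    simp
    ring
  · intro Δ hΔ
    refine ⟨Real.sqrt (Δ / (ε * β - γ / 2)) + 1, by positivity, ?_⟩
    have h1 : Real.sqrt (Δ / (ε * β - γ / 2)) ^ 2 = Δ / (ε * β - γ / 2) := by
      rw [Real.sq_sqrt]; positivity
    have h2 : (ε * β - γ / 2) * Real.sqrt (Δ / (ε * β - γ / 2)) ^ 2 = Δ := by
      rw [h1, mul_div_cancel₀ Δ hpos.ne']
    nlinarith [Real.sqrt_nonneg (Δ / (ε * β - γ / 2))]
end

section
/- Let D₀ be a zero-mean distribution on ℝ^m with finite second moment, and let D(θ) be the law of z₀ + μθ with μ : ℝ^d → ℝ^m linear. Let g : ℝ^m → ℝ be γ_z-strongly convex. Then for all θ, θ' and α ∈ [0,1]: E_{z∼D(αθ+(1-α)θ')} g(z) ≤ α E_{z∼D(θ)} g(z) + (1-α) E_{z∼D(θ')} g(z) − (α(1-α)γ_z/2)‖μ(θ − θ')‖². -/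
open MeasureTheory

lemma strong_convex_ineq {n : ℕ} (γz : ℝ) (hγz : 0 ≤ γz)
    (g : EuclideanSpace ℝ (Fin n) → ℝ)
    (hg : ConvexOn ℝ Set.univ (fun z => g z - γz / 2 * ‖z‖ ^ 2))
    (x y : EuclideanSpace ℝ (Fin n)) (a : ℝ) (ha : 0 ≤ a) (ha1 : a ≤ 1) :
    g (a • x + (1 - a) • y)
      ≤ a * g x + (1 - a) * g y - a * (1 - a) * γz / 2 * ‖x - y‖ ^ 2 := by
  have hb : (0:ℝ) ≤ 1 - a := by linarith
  have hconv := hg.2 (Set.mem_univ x) (Set.mem_univ y) ha hb (by ring)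
  simp only [smul_eq_mul] at hconv
  have hxy : ‖a • x + (1 - a) • y‖ ^ 2
      = a ^ 2 * ‖x‖ ^ 2 + 2 * (a * (1 - a)) * inner ℝ x y + (1 - a) ^ 2 * ‖y‖ ^ 2 := by
    rw [← real_inner_self_eq_norm_sq, ← real_inner_self_eq_norm_sq,
      ← real_inner_self_eq_norm_sq]
    simp [inner_add_add_self, inner_smul_left, inner_smul_right, real_inner_comm x y,
      norm_add_sq_real, norm_smul, mul_pow, real_inner_smul_left, real_inner_smul_right]
    ring
  have hsub : ‖x - y‖ ^ 2 = ‖x‖ ^ 2 - 2 * inner ℝ x y + ‖y‖ ^ 2 := by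
    rw [← real_inner_self_eq_norm_sq, ← real_inner_self_eq_norm_sq,
      ← real_inner_self_eq_norm_sq]
    simp [inner_sub_sub_self, real_inner_comm x y, norm_sub_sq_real]
  rw [hxy] at hconv
  rw [hsub]
  nlinarith [hconv]

/-- For a location family D(θ) = law of z₀ + μθ with z₀ ∼ D₀ zero-mean with
finite second moment, and g γ_z-strongly convex (g - (γ_z/2)‖·‖² convex),
E_{z∼D(αθ+(1-α)θ')} g(z) ≤ α E_{z∼D(θ)} g + (1-α) E_{z∼D(θ')} g
  − (α(1-α)γ_z/2)‖μ(θ − θ')‖². -/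
theorem stmt6 (m d : ℕ) (D0 : Measure (EuclideanSpace ℝ (Fin m))) [IsProbabilityMeasure D0]
    (hmean : ∫ z, z ∂D0 = 0) (hmom : Integrable (fun z => ‖z‖ ^ 2) D0)
    (μ : EuclideanSpace ℝ (Fin d) →ₗ[ℝ] EuclideanSpace ℝ (Fin m))
    (γz : ℝ) (hγz : 0 ≤ γz)
    (g : EuclideanSpace ℝ (Fin m) → ℝ)
    (hg : ConvexOn ℝ Set.univ (fun z => g z - γz / 2 * ‖z‖ ^ 2))
    (θ θ' : EuclideanSpace ℝ (Fin d)) (α : ℝ) (hα : α ∈ Set.Icc (0 : ℝ) 1)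
    (h1 : Integrable (fun z => g (z + μ (α • θ + (1 - α) • θ'))) D0)
    (h2 : Integrable (fun z => g (z + μ θ)) D0)
    (h3 : Integrable (fun z => g (z + μ θ')) D0) :
    ∫ z, g (z + μ (α • θ + (1 - α) • θ')) ∂D0
      ≤ α * ∫ z, g (z + μ θ) ∂D0 + (1 - α) * ∫ z, g (z + μ θ') ∂D0
        - α * (1 - α) * γz / 2 * ‖μ (θ - θ')‖ ^ 2 := by
  obtain ⟨ha, ha1⟩ := hα
  set C := α * (1 - α) * γz / 2 * ‖μ (θ - θ')‖ ^ 2 with hC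
  have hpt : ∀ z : EuclideanSpace ℝ (Fin m),
      g (z + μ (α • θ + (1 - α) • θ'))
        ≤ α * g (z + μ θ) + (1 - α) * g (z + μ θ') - C := by
    intro z
    have key := strong_convex_ineq γz hγz g hg (z + μ θ) (z + μ θ') α ha ha1
    have e1 : α • (z + μ θ) + (1 - α) • (z + μ θ') = z + μ (α • θ + (1 - α) • θ') := by
      simp only [map_add, LinearMap.map_smul]
      module
    have e2 : (z + μ θ) - (z + μ θ') = μ (θ - θ') := by
      rw [map_sub]; abel
    rw [e1, e2] at key
    exact key
  have hInt1 : Integrable (fun z => α * g (z + μ θ) + (1 - α) * g (z + μ θ')) D0 :=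
    (h2.const_mul α).add (h3.const_mul (1 - α))
  have hint : Integrable (fun z => α * g (z + μ θ) + (1 - α) * g (z + μ θ') - C) D0 :=
    hInt1.sub (integrable_const C)
  calc ∫ z, g (z + μ (α • θ + (1 - α) • θ')) ∂D0
      ≤ ∫ z, (α * g (z + μ θ) + (1 - α) * g (z + μ θ') - C) ∂D0 :=
        integral_mono h1 hint hpt
    _ = α * ∫ z, g (z + μ θ) ∂D0 + (1 - α) * ∫ z, g (z + μ θ') ∂D0 - C := by
        rw [integral_sub hInt1 (integrable_const C),
          integral_add (h2.const_mul α) (h3.const_mul (1 - α)),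
          integral_const_mul, integral_const_mul, integral_const]
        simp
end

section
/- Let D₀ be a zero-mean distribution on ℝ^m with covariance Σ_{z₀} and D(θ) the law of (Σ₀+Σ(θ))z₀ + μ₀ + μθ with Σ(·), μ linear. Define σ_max(μ) = max_{‖θ‖=1} ‖μθ‖ and σ_max(Σ) = max_{‖θ‖=1} ‖Σ_{z₀}^{1/2} Σ(θ)ᵀ‖_F. Then D(·) is ε-sensitive (W₁(D(θ),D(θ')) ≤ ε‖θ−θ'‖ for all θ, θ') with ε = sqrt(σ_max(μ)² + σ_max(Σ)²). -/
open MeasureTheory Matrix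

/-- Projection onto a matrix entry, as a linear map. -/
noncomputable def entryLM (m : ℕ) (i j : Fin m) : Matrix (Fin m) (Fin m) ℝ →ₗ[ℝ] ℝ where
  toFun A := A i j
  map_add' _ _ := rfl
  map_smul' _ _ := rfl

theorem norm_sq_sum_aux (m : ℕ) (x : EuclideanSpace ℝ (Fin m)) : ‖x‖ ^ 2 = ∑ i, (x i) ^ 2 := by
  rw [EuclideanSpace.norm_eq, Real.sq_sqrt (by positivity)]
  simp [sq_abs]

theorem abs_apply_le_aux (m : ℕ) (x : EuclideanSpace ℝ (Fin m)) (j : Fin m) : |x j| ≤ ‖x‖ := by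
  rw [← Real.sqrt_sq_eq_abs, EuclideanSpace.norm_eq]
  apply Real.sqrt_le_sqrt
  calc (x j)^2 ≤ ∑ i, (x i)^2 :=
        Finset.single_le_sum (fun i _ => sq_nonneg (x i)) (Finset.mem_univ j)
    _ = ∑ i, ‖x i‖^2 := by simp [sq_abs]

theorem frob_eq_aux (m : ℕ) (R M C : Matrix (Fin m) (Fin m) ℝ) (hR : Rᵀ = R) (hRR : R * R = C)
    (hCs : ∀ j k, C j k = C k j) :
    ∑ i, ∑ j, ∑ k, M i j * C j k * M i k = ∑ i, ∑ j, ((R * Mᵀ) i j)^2 := by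
  have h1 : ∑ i, ∑ j, ((R * Mᵀ) i j)^2 = Matrix.trace ((R * Mᵀ) * (R * Mᵀ)ᵀ) := by
    simp only [Matrix.trace, Matrix.diag, Matrix.mul_apply, Matrix.transpose_apply, sq]
  have h2 : ∑ i, ∑ j, ∑ k, M i j * C j k * M i k = Matrix.trace (M * C * Mᵀ) := by
    simp only [Matrix.trace, Matrix.diag, Matrix.mul_apply, Matrix.transpose_apply,
      Finset.sum_mul, Finset.mul_sum]
    exact Finset.sum_congr rfl fun i _ => Finset.sum_congr rfl fun j _ =>
      Finset.sum_congr rfl fun k _ => by rw [hCs j k]; ring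
  rw [h1, h2]
  rw [Matrix.transpose_mul, Matrix.transpose_transpose, hR]
  rw [show R * Mᵀ * (M * R) = R * (Mᵀ * M) * R by noncomm_ring]
  rw [Matrix.trace_mul_cycle R (Mᵀ * M) R, ← Matrix.mul_assoc, hRR]
  rw [Matrix.trace_mul_cycle M C Mᵀ, Matrix.trace_mul_cycle Mᵀ M C]

theorem int_norm_sq_aux (m : ℕ) (D0 : Measure (EuclideanSpace ℝ (Fin m)))
    [IsProbabilityMeasure D0]
    (hmom : Integrable (fun z => ‖z‖ ^ 2) D0) (C : Matrix (Fin m) (Fin m) ℝ)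
    (hC : ∀ i j, C i j = ∫ z, z i * z j ∂D0) (M : Matrix (Fin m) (Fin m) ℝ) :
    ∫ z, ‖Matrix.toEuclideanLin M z‖ ^ 2 ∂D0 = ∑ i, ∑ j, ∑ k, M i j * C j k * M i k := by
  have hcont : ∀ j : Fin m, Continuous fun z : EuclideanSpace ℝ (Fin m) => z j :=
    fun j => (EuclideanSpace.proj j : EuclideanSpace ℝ (Fin m) →L[ℝ] ℝ).continuous
  have hint : ∀ j k, Integrable (fun z : EuclideanSpace ℝ (Fin m) => z j * z k) D0 := by
    intro j k
    refine hmom.mono (((hcont j).mul (hcont k)).aestronglyMeasurable) ?_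
    filter_upwards with z
    rw [Real.norm_eq_abs, abs_mul, Real.norm_eq_abs, abs_pow, sq_abs, sq]
    exact mul_le_mul (abs_apply_le_aux m z j) (abs_apply_le_aux m z k) (abs_nonneg _)
      (norm_nonneg _)
  have hInt2 : ∀ (i j k : Fin m),
      Integrable (fun z : EuclideanSpace ℝ (Fin m) => (M i j * M i k) * (z j * z k)) D0 :=
    fun i j k => (hint j k).const_mul _
  have hpt : ∀ z : EuclideanSpace ℝ (Fin m),
      ‖Matrix.toEuclideanLin M z‖ ^ 2 = ∑ i, ∑ j, ∑ k, (M i j * M i k) * (z j * z k) := by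
    intro z
    rw [norm_sq_sum_aux]
    refine Finset.sum_congr rfl fun i _ => ?_
    show (∑ j, M i j * z j) ^ 2 = _
    rw [sq, Finset.sum_mul_sum]
    exact Finset.sum_congr rfl fun j _ => Finset.sum_congr rfl fun k _ => by ring
  simp_rw [hpt]
  rw [integral_finset_sum _ fun i _ => integrable_finset_sum _ fun j _ =>
    integrable_finset_sum _ fun k _ => hInt2 i j k]
  refine Finset.sum_congr rfl fun i _ => ?_
  rw [integral_finset_sum _ fun j _ => integrable_finset_sum _ fun k _ => hInt2 i j k]
  refine Finset.sum_congr rfl fun j _ => ?_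
  rw [integral_finset_sum _ fun k _ => hInt2 i j k]
  refine Finset.sum_congr rfl fun k _ => ?_
  rw [MeasureTheory.integral_const_mul, hC j k]
  ring

theorem jensen_bound_aux (m : ℕ) (D0 : Measure (EuclideanSpace ℝ (Fin m)))
    [IsProbabilityMeasure D0]
    (hmean : ∫ z, z ∂D0 = 0) (hmom : Integrable (fun z => ‖z‖ ^ 2) D0)
    (M : Matrix (Fin m) (Fin m) ℝ) (w : EuclideanSpace ℝ (Fin m)) :
    ∫ z, ‖Matrix.toEuclideanLin M z + w‖ ∂D0 ≤
      Real.sqrt ((∫ z, ‖Matrix.toEuclideanLin M z‖ ^ 2 ∂D0) + ‖w‖ ^ 2) := by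
  set T : EuclideanSpace ℝ (Fin m) →L[ℝ] EuclideanSpace ℝ (Fin m) :=
    LinearMap.toContinuousLinearMap (Matrix.toEuclideanLin M) with hT
  have hTapp : ∀ z, Matrix.toEuclideanLin M z = T z := fun z => rfl
  have hid2 : MemLp (fun z : EuclideanSpace ℝ (Fin m) => z) 2 D0 :=
    (memLp_two_iff_integrable_sq_norm aestronglyMeasurable_id).2 hmom
  have hT2 : MemLp (fun z => T z) 2 D0 := T.comp_memLp' hid2
  have hTw2 : MemLp (fun z => T z + w) 2 D0 := hT2.add (memLp_const w)
  have hX2 : MemLp (fun z => ‖T z + w‖) 2 D0 := hTw2.norm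
  have hTsq_int : Integrable (fun z => ‖T z‖ ^ 2) D0 :=
    (memLp_two_iff_integrable_sq_norm hT2.aestronglyMeasurable).1 hT2
  have hTint : Integrable (fun z => T z) D0 := hT2.integrable one_le_two
  have hid_int : Integrable (fun z : EuclideanSpace ℝ (Fin m) => z) D0 :=
    hid2.integrable one_le_two
  have hinner_int : Integrable (fun z => (inner ℝ w (T z) : ℝ)) D0 :=
    ContinuousLinearMap.integrable_comp (innerSL ℝ w) hTint
  have hexp : (∫ z, ‖T z + w‖ ^ 2 ∂D0) = (∫ z, ‖T z‖ ^ 2 ∂D0) + ‖w‖ ^ 2 := by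
    have hpt : ∀ z : EuclideanSpace ℝ (Fin m),
        ‖T z + w‖ ^ 2 = ‖T z‖ ^ 2 + 2 * (inner ℝ w (T z) : ℝ) + ‖w‖ ^ 2 := by
      intro z
      rw [norm_add_sq_real, real_inner_comm]
    simp_rw [hpt]
    have h1 : Integrable (fun z => ‖T z‖ ^ 2 + 2 * (inner ℝ w (T z) : ℝ)) D0 :=
      hTsq_int.add (hinner_int.const_mul 2)
    have h2 : Integrable (fun z : EuclideanSpace ℝ (Fin m) => 2 * (inner ℝ w (T z) : ℝ)) D0 :=
      hinner_int.const_mul 2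
    rw [integral_add h1 (integrable_const _), integral_add hTsq_int h2,
      MeasureTheory.integral_const_mul, integral_inner hTint,
      ContinuousLinearMap.integral_comp_comm T hid_int, hmean]
    simp
  have hI_nonneg : 0 ≤ ∫ z, ‖T z + w‖ ∂D0 := integral_nonneg fun z => norm_nonneg _
  have hvar := ProbabilityTheory.variance_nonneg (fun z => ‖T z + w‖) D0
  rw [ProbabilityTheory.variance_eq_sub hX2] at hvar
  have hsq : (∫ z, ‖T z + w‖ ∂D0) ^ 2 ≤ ∫ z, ‖T z + w‖ ^ 2 ∂D0 := by
    simp only [Pi.pow_apply] at hvar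
    linarith
  calc ∫ z, ‖Matrix.toEuclideanLin M z + w‖ ∂D0 = ∫ z, ‖T z + w‖ ∂D0 := rfl
    _ = Real.sqrt ((∫ z, ‖T z + w‖ ∂D0) ^ 2) := (Real.sqrt_sq hI_nonneg).symm
    _ ≤ Real.sqrt (∫ z, ‖T z + w‖ ^ 2 ∂D0) := Real.sqrt_le_sqrt hsq
    _ = Real.sqrt ((∫ z, ‖Matrix.toEuclideanLin M z‖ ^ 2 ∂D0) + ‖w‖ ^ 2) := by
        simp_rw [hTapp]; rw [hexp]

theorem sup_sphere_bound_aux {d : ℕ} (f : EuclideanSpace ℝ (Fin d) → ℝ)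
    (hf : Continuous f) (hhom : ∀ (c : ℝ) v, f (c • v) = |c| * f v)
    (σ : ℝ) (hσ : σ = ⨆ θ : Metric.sphere (0 : EuclideanSpace ℝ (Fin d)) 1,
      f (θ : EuclideanSpace ℝ (Fin d))) :
    ∀ v, f v ≤ σ * ‖v‖ := by
  have hbdd : BddAbove (Set.range fun θ : Metric.sphere (0 : EuclideanSpace ℝ (Fin d)) 1 =>
      f (θ : EuclideanSpace ℝ (Fin d))) := by
    rw [← Set.image_eq_range]
    exact (isCompact_sphere (0 : EuclideanSpace ℝ (Fin d)) 1).bddAbove_image hf.continuousOn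
  intro v
  rcases eq_or_ne v 0 with rfl | hv
  · have : f 0 = 0 := by
      have := hhom 0 0
      simpa using this
    simp [this]
  · have hnv : ‖v‖ ≠ 0 := norm_ne_zero_iff.mpr hv
    have hu : (‖v‖⁻¹ • v) ∈ Metric.sphere (0 : EuclideanSpace ℝ (Fin d)) 1 := by
      simp [mem_sphere_iff_norm, norm_smul, abs_of_nonneg (inv_nonneg.2 (norm_nonneg v)),
        inv_mul_cancel₀ hnv]
    set u : Metric.sphere (0 : EuclideanSpace ℝ (Fin d)) 1 := ⟨‖v‖⁻¹ • v, hu⟩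
    have hfu : f (u : EuclideanSpace ℝ (Fin d)) ≤ σ := hσ ▸ le_ciSup hbdd u
    have hvu : f v = ‖v‖ * f (u : EuclideanSpace ℝ (Fin d)) := by
      have : v = ‖v‖ • (u : EuclideanSpace ℝ (Fin d)) := by
        simp [u, smul_smul, mul_inv_cancel₀ hnv]
      calc f v = f (‖v‖ • (u : EuclideanSpace ℝ (Fin d))) := by rw [← this]
        _ = |‖v‖| * f (u : EuclideanSpace ℝ (Fin d)) := hhom _ _
        _ = ‖v‖ * f (u : EuclideanSpace ℝ (Fin d)) := by rw [abs_of_nonneg (norm_nonneg v)]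
    rw [hvu, mul_comm σ ‖v‖]
    exact mul_le_mul_of_nonneg_left hfu (norm_nonneg v)

/-- Wasserstein-1 distance: infimum over couplings π of P and Q of E_{(z,z')∼π}‖z - z'‖. -/
noncomputable def W1 {m : ℕ} (P Q : Measure (EuclideanSpace ℝ (Fin m))) : ℝ :=
  sInf {x : ℝ | ∃ π : Measure (EuclideanSpace ℝ (Fin m) × EuclideanSpace ℝ (Fin m)),
    π.fst = P ∧ π.snd = Q ∧ x = ∫ p, ‖p.1 - p.2‖ ∂π}

theorem W1_le_coupling {m : ℕ} (D0 : Measure (EuclideanSpace ℝ (Fin m)))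
    (f g : EuclideanSpace ℝ (Fin m) → EuclideanSpace ℝ (Fin m))
    (hf : Continuous f) (hg : Continuous g) :
    W1 (D0.map f) (D0.map g) ≤ ∫ z, ‖f z - g z‖ ∂D0 := by
  have hpair : Continuous fun z => (f z, g z) := hf.prodMk hg
  apply csInf_le
  · refine ⟨0, fun x hx => ?_⟩
    obtain ⟨π, -, -, hx⟩ := hx
    exact hx ▸ integral_nonneg fun p => norm_nonneg _
  · refine ⟨D0.map fun z => (f z, g z), ?_, ?_, ?_⟩
    · show (D0.map fun z => (f z, g z)).map Prod.fst = D0.map f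
      rw [Measure.map_map measurable_fst hpair.measurable]
      rfl
    · show (D0.map fun z => (f z, g z)).map Prod.snd = D0.map g
      rw [Measure.map_map measurable_snd hpair.measurable]
      rfl
    · rw [integral_map (f := fun p : EuclideanSpace ℝ (Fin m) × EuclideanSpace ℝ (Fin m) => ‖p.1 - p.2‖)
          hpair.measurable.aemeasurable
        ((continuous_fst.sub continuous_snd).norm.aestronglyMeasurable : AEStronglyMeasurable
          (fun p : EuclideanSpace ℝ (Fin m) × EuclideanSpace ℝ (Fin m) => ‖p.1 - p.2‖) _)]

/-- For a location-scale family D(θ) = law of (S0+Σ(θ))z₀ + μ₀ + μθ with z₀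
zero-mean with covariance matrix C, the map D(·) is ε-sensitive with
ε = sqrt(σ_max(μ)² + σ_max(Σ)²), where σ_max(μ) = sup_{‖θ‖=1}‖μθ‖ and
σ_max(Σ) = sup_{‖θ‖=1}‖C^{1/2}Σ(θ)ᵀ‖_F. -/
theorem stmt8 (m d : ℕ) (D0 : Measure (EuclideanSpace ℝ (Fin m))) [IsProbabilityMeasure D0]
    (hmean : ∫ z, z ∂D0 = 0) (hmom : Integrable (fun z => ‖z‖ ^ 2) D0)
    (C : Matrix (Fin m) (Fin m) ℝ) (hC : ∀ i j, C i j = ∫ z, z i * z j ∂D0)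
    (hCpsd : C.PosSemidef)
    (S : EuclideanSpace ℝ (Fin d) →ₗ[ℝ] Matrix (Fin m) (Fin m) ℝ)
    (S0 : Matrix (Fin m) (Fin m) ℝ) (μ₀ : EuclideanSpace ℝ (Fin m))
    (μ : EuclideanSpace ℝ (Fin d) →ₗ[ℝ] EuclideanSpace ℝ (Fin m))
    (D : EuclideanSpace ℝ (Fin d) → Measure (EuclideanSpace ℝ (Fin m)))
    (hD : ∀ θ, D θ = D0.map (fun z =>
      Matrix.toEuclideanLin (S0 + S θ) z + μ₀ + μ θ))
    (σμ σS : ℝ)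
    (hσμ : σμ = ⨆ θ : Metric.sphere (0 : EuclideanSpace ℝ (Fin d)) 1, ‖μ θ‖)
    (hσS : σS = ⨆ θ : Metric.sphere (0 : EuclideanSpace ℝ (Fin d)) 1,
      Real.sqrt (∑ i, ∑ j, (((hCpsd.1.eigenvectorUnitary.1 * diagonal ((RCLike.ofReal : ℝ → ℝ) ∘ (√·) ∘ hCpsd.1.eigenvalues) *
        (star hCpsd.1.eigenvectorUnitary : Matrix (Fin m) (Fin m) ℝ)) * (S (θ : EuclideanSpace ℝ (Fin d)))ᵀ) i j) ^ 2)) :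
    ∀ θ θ', W1 (D θ) (D θ') ≤ Real.sqrt (σμ ^ 2 + σS ^ 2) * ‖θ - θ'‖ := by
  intro θ θ'
  set R : Matrix (Fin m) (Fin m) ℝ := hCpsd.1.eigenvectorUnitary.1 * diagonal ((RCLike.ofReal : ℝ → ℝ) ∘ (√·) ∘ hCpsd.1.eigenvalues) *
        (star hCpsd.1.eigenvectorUnitary : Matrix (Fin m) (Fin m) ℝ) with hRdef
  have hRc : R = Unitary.conjStarAlgAut ℝ _ hCpsd.1.eigenvectorUnitary
      (diagonal ((RCLike.ofReal : ℝ → ℝ) ∘ (√·) ∘ hCpsd.1.eigenvalues)) := by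
    rw [Unitary.conjStarAlgAut_apply]
  have hR : Rᵀ = R := by
    rw [← Matrix.conjTranspose_eq_transpose_of_trivial]
    rw [hRc, ← Matrix.star_eq_conjTranspose, ← map_star]
    congr 1
    simp [Matrix.star_eq_conjTranspose]
  have hRR : R * R = C := by
    rw [hRc, ← map_mul, diagonal_mul_diagonal]
    refine Eq.trans ?_ hCpsd.1.spectral_theorem.symm
    congr 2
    funext i
    simp [Real.mul_self_sqrt (hCpsd.eigenvalues_nonneg i)]
  have hCs : ∀ j k, C j k = C k j := by
    intro j k
    rw [hC, hC]
    simp_rw [mul_comm]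
  set v := θ - θ' with hvdef
  -- the two maps
  set f : EuclideanSpace ℝ (Fin m) → EuclideanSpace ℝ (Fin m) :=
    fun z => Matrix.toEuclideanLin (S0 + S θ) z + μ₀ + μ θ with hfdef
  set g : EuclideanSpace ℝ (Fin m) → EuclideanSpace ℝ (Fin m) :=
    fun z => Matrix.toEuclideanLin (S0 + S θ') z + μ₀ + μ θ' with hgdef
  have hfc : Continuous f :=
    (((Matrix.toEuclideanLin (S0 + S θ)).continuous_of_finiteDimensional).add
      continuous_const).add continuous_const
  have hgc : Continuous g :=
    (((Matrix.toEuclideanLin (S0 + S θ')).continuous_of_finiteDimensional).add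
      continuous_const).add continuous_const
  have hdiff : ∀ z, f z - g z = Matrix.toEuclideanLin (S v) z + μ v := by
    intro z
    have h1 : Matrix.toEuclideanLin (S v) z =
        Matrix.toEuclideanLin (S0 + S θ) z - Matrix.toEuclideanLin (S0 + S θ') z := by
      rw [← LinearMap.sub_apply, ← map_sub]
      congr 1
      rw [hvdef, map_sub]
      abel_nf
    have h2 : μ v = μ θ - μ θ' := by rw [hvdef, map_sub]
    rw [h1, h2, hfdef, hgdef]
    ext i
    simp only [PiLp.add_apply, PiLp.sub_apply]
    ring
  -- the Frobenius-norm function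
  set F : EuclideanSpace ℝ (Fin d) → ℝ :=
    fun u => Real.sqrt (∑ i, ∑ j, ((R * (S u)ᵀ) i j) ^ 2) with hFdef
  have hSij : ∀ (i j : Fin m), Continuous fun u => S u i j := fun i j =>
    LinearMap.continuous_of_finiteDimensional ((entryLM m i j).comp S)
  have hFcont : Continuous F := by
    have hentry : ∀ (i j : Fin m), Continuous fun u => (R * (S u)ᵀ) i j := by
      intro i j
      simp only [Matrix.mul_apply, Matrix.transpose_apply]
      exact continuous_finset_sum _ fun k _ => continuous_const.mul (hSij j k)
    exact Real.continuous_sqrt.comp (continuous_finset_sum _ fun i _ =>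
      continuous_finset_sum _ fun j _ => (hentry i j).pow 2)
  have hFhom : ∀ (c : ℝ) u, F (c • u) = |c| * F u := by
    intro c u
    have h1 : ∀ (i j : Fin m), (R * (S (c • u))ᵀ) i j = c * (R * (S u)ᵀ) i j := by
      intro i j
      rw [S.map_smul, Matrix.transpose_smul, Matrix.mul_smul]
      rfl
    simp only [hFdef]
    simp_rw [h1, mul_pow, ← Finset.mul_sum]
    rw [Real.sqrt_mul (sq_nonneg c), Real.sqrt_sq_eq_abs]
  have hFnn : ∀ u, 0 ≤ F u := fun u => Real.sqrt_nonneg _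
  have hFle : ∀ u, F u ≤ σS * ‖u‖ := sup_sphere_bound_aux F hFcont hFhom σS hσS
  -- bound on μ
  have hμcont : Continuous fun u : EuclideanSpace ℝ (Fin d) => ‖μ u‖ :=
    (μ.continuous_of_finiteDimensional).norm
  have hμhom : ∀ (c : ℝ) u, ‖μ (c • u)‖ = |c| * ‖μ u‖ := by
    intro c u
    rw [μ.map_smul, norm_smul, Real.norm_eq_abs]
  have hμle : ∀ u, ‖μ u‖ ≤ σμ * ‖u‖ :=
    sup_sphere_bound_aux _ hμcont hμhom σμ hσμ
  -- main chain
  have hQ : (∫ z, ‖Matrix.toEuclideanLin (S v) z‖ ^ 2 ∂D0) = F v ^ 2 := by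
    rw [int_norm_sq_aux m D0 hmom C hC (S v), frob_eq_aux m R (S v) C hR hRR hCs, hFdef,
      Real.sq_sqrt (by positivity)]
  calc W1 (D θ) (D θ')
      ≤ ∫ z, ‖f z - g z‖ ∂D0 := by
        rw [hD θ, hD θ']
        exact W1_le_coupling D0 f g hfc hgc
    _ = ∫ z, ‖Matrix.toEuclideanLin (S v) z + μ v‖ ∂D0 := by simp_rw [hdiff]
    _ ≤ Real.sqrt ((∫ z, ‖Matrix.toEuclideanLin (S v) z‖ ^ 2 ∂D0) + ‖μ v‖ ^ 2) :=
        jensen_bound_aux m D0 hmean hmom (S v) (μ v)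
    _ = Real.sqrt (F v ^ 2 + ‖μ v‖ ^ 2) := by rw [hQ]
    _ ≤ Real.sqrt ((σS * ‖v‖) ^ 2 + (σμ * ‖v‖) ^ 2) := by
        apply Real.sqrt_le_sqrt
        have h1 : F v ^ 2 ≤ (σS * ‖v‖) ^ 2 := by
          apply pow_le_pow_left₀ (hFnn v) (hFle v)
        have h2 : ‖μ v‖ ^ 2 ≤ (σμ * ‖v‖) ^ 2 := by
          apply pow_le_pow_left₀ (norm_nonneg _) (hμle v)
        linarith
    _ = Real.sqrt ((σμ ^ 2 + σS ^ 2) * ‖v‖ ^ 2) := by ring_nf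
    _ = Real.sqrt (σμ ^ 2 + σS ^ 2) * ‖θ - θ'‖ := by
        rw [Real.sqrt_mul (by positivity), Real.sqrt_sq (norm_nonneg v)]
end
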